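/- Let f : ℝ² → ℝ² be a homeomorphism commuting with the integer translations (a lift of a torus homeomorphism homotopic to the identity), and let v ∈ ℝ² be nonzero. If the deviation of f in direction v is bounded, i.e. there is M > 0 such that |⟨(fⁿ(x) − x) − (fⁿ(y) − y), v⟩| ≤ M for all x, y ∈ ℝ² and all n ∈ ℤ, then there exists a ∈ ℝ such that the orthogonal projection onto v of the rotation set of f equals the single point {a}. Consequently the rotation set is contained in the line {t v^⊥ + a v/‖v‖ : t ∈ ℝ}. -/

import Mathlib

open Filter Topology MeasureTheory

noncomputable section

/-- The plane ℝ². -/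
abbrev V2 : Type := ℝ × ℝ

/-- Euclidean dot product on ℝ². -/
def dot (x y : V2) : ℝ := x.1 * y.1 + x.2 * y.2

/-- Euclidean norm on ℝ². -/
def nrm (x : V2) : ℝ := Real.sqrt (dot x x)

/-- v^⊥ = (−v₂, v₁). -/
def perp (v : V2) : V2 := (-v.2, v.1)

/-- Inclusion of ℤ² into ℝ². -/
def intVec (u : ℤ × ℤ) : V2 := ((u.1 : ℝ), (u.2 : ℝ))

/-- `f` is a lift of a torus map: it commutes with all integer translations. -/
def IsLift (f : V2 → V2) : Prop := ∀ (z : V2) (u : ℤ × ℤ), f (z + intVec u) = f z + intVec u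

/-- The Misiurewicz–Ziemian rotation set of `f`. -/
def RotSet (f : V2 → V2) : Set V2 :=
  {v | ∃ (n : ℕ → ℕ) (x : ℕ → V2), Tendsto n atTop atTop ∧
    Tendsto (fun i => ((n i : ℝ))⁻¹ • (f^[n i] (x i) - x i)) atTop (𝓝 v)}

/- Auxiliary lemmas -/

lemma dot_cont (v : V2) : Continuous (fun p : V2 => dot p v) := by
  unfold dot; fun_prop

/-- The rotation set of a continuous lift is nonempty. -/
lemma rotset_nonempty (f : V2 → V2) (hf : Continuous f) (hlift : IsLift f) :
    (RotSet f).Nonempty := by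
  -- displacement is bounded
  have hK : IsCompact (Set.Icc (0 : V2) 1) := isCompact_Icc
  obtain ⟨C₀, hC₀⟩ := hK.exists_bound_of_continuousOn (f := fun z => f z - z)
    ((hf.sub continuous_id).continuousOn)
  set C : ℝ := max C₀ 0 with hCdef
  have hC0 : 0 ≤ C := le_max_right _ _
  have hdisp : ∀ z : V2, ‖f z - z‖ ≤ C := by
    intro z
    set zf : V2 := (Int.fract z.1, Int.fract z.2) with hzf
    have hz : z = zf + intVec (⌊z.1⌋, ⌊z.2⌋) := by
      have e1 := Int.fract_add_floor z.1
      have e2 := Int.fract_add_floor z.2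
      refine Prod.ext ?_ ?_ <;>
        simp only [hzf, Prod.fst_add, Prod.snd_add, intVec] <;> linarith
    have h1 : f z - z = f zf - zf := by
      rw [hz, hlift zf (⌊z.1⌋, ⌊z.2⌋)]
      abel
    have hmem : zf ∈ Set.Icc (0 : V2) 1 := by
      constructor <;>
        refine ⟨?_, ?_⟩ <;>
        simp [hzf, Int.fract_nonneg, (Int.fract_lt_one _).le, Prod.le_def]
    calc ‖f z - z‖ = ‖f zf - zf‖ := by rw [h1]
      _ ≤ C₀ := hC₀ zf hmem
      _ ≤ C := le_max_left _ _
  have hbound : ∀ n : ℕ, ‖f^[n] 0 - 0‖ ≤ n * C := by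
    intro n
    induction n with
    | zero => simp
    | succ n ih =>
      have : f^[n+1] 0 - 0 = (f (f^[n] 0) - f^[n] 0) + (f^[n] 0 - 0) := by
        rw [Function.iterate_succ_apply']; abel
      rw [this]
      calc ‖(f (f^[n] 0) - f^[n] 0) + (f^[n] 0 - 0)‖
          ≤ ‖f (f^[n] 0) - f^[n] 0‖ + ‖f^[n] 0 - 0‖ := norm_add_le _ _
        _ ≤ C + n * C := add_le_add (hdisp _) ih
        _ = (n+1 : ℕ) * C := by push_cast; ring
  set u : ℕ → V2 := fun n => ((n : ℝ))⁻¹ • (f^[n] 0 - 0) with hu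
  have humem : ∀ n, u n ∈ Metric.closedBall (0 : V2) C := by
    intro n
    rw [Metric.mem_closedBall, dist_zero_right]
    rcases Nat.eq_zero_or_pos n with h | h
    · simp [hu, h, hC0]
    · have hn : (0:ℝ) < n := by exact_mod_cast h
      rw [hu]
      simp only [norm_smul, norm_inv, Real.norm_natCast]
      calc (n:ℝ)⁻¹ * ‖f^[n] 0 - 0‖ ≤ (n:ℝ)⁻¹ * (n * C) := by
            apply mul_le_mul_of_nonneg_left (hbound n) (by positivity)
        _ = C := by field_simp
  obtain ⟨w, -, φ, hφ, hw⟩ := (isCompact_closedBall (0:V2) C).tendsto_subseq humem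
  exact ⟨w, φ, fun _ => 0, hφ.tendsto_atTop, hw⟩

/-- If the deviation of a lift f in direction v is bounded, the orthogonal projection
of the rotation set onto v is a single point {a}, and the rotation set lies on the
line of points t • v^⊥ + (a/‖v‖) • v. -/
theorem stmt0 (f : Equiv.Perm V2) (hf : Continuous ⇑f) (hf' : Continuous ⇑f.symm)
    (hlift : IsLift ⇑f) (v : V2) (hv : v ≠ 0)
    (M : ℝ) (hM : 0 < M)
    (hdev : ∀ (n : ℤ) (x y : V2), |dot (((f ^ n) x - x) - ((f ^ n) y - y)) v| ≤ M) :
    ∃ a : ℝ, (fun p => dot p v / nrm v) '' RotSet ⇑f = {a} ∧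
      RotSet ⇑f ⊆ {w | ∃ t : ℝ, w = t • perp v + (a / nrm v) • v} := by
  have dot_sub : ∀ x y w : V2, dot (x - y) w = dot x w - dot y w := by
    intro x y w; simp [dot]; ring
  -- deviation bound for natural iterates
  have hdevN : ∀ (n : ℕ) (x y : V2), |dot ((f^[n] x - x) - (f^[n] y - y)) v| ≤ M := by
    intro n x y
    have h1 : (⇑f)^[n] = ⇑(f ^ (n:ℤ)) := by
      rw [zpow_natCast, Equiv.Perm.iterate_eq_pow]
    rw [h1]
    exact hdev n x y
  set g : ℕ → ℝ := fun n => dot ((⇑f)^[n] 0 - 0) v with hg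
  have hg0 : g 0 = 0 := by simp [hg, dot]
  have halmost : ∀ n m : ℕ, |g (n + m) - g n - g m| ≤ M := by
    intro n m
    have h1 : (⇑f)^[n + m] (0:V2) = (⇑f)^[m] ((⇑f)^[n] 0) := by
      rw [add_comm, Function.iterate_add_apply]
    have h2 : g (n + m) - g n - g m
        = dot (((⇑f)^[m] ((⇑f)^[n] 0) - (⇑f)^[n] 0) - ((⇑f)^[m] 0 - 0)) v := by
      simp only [hg, h1, dot_sub]
      ring
    rw [h2]
    exact hdevN m _ 0
  have hmul : ∀ n m : ℕ, |g (n * m) - m * g n| ≤ m * M := by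
    intro n m
    induction m with
    | zero => simp [hg0]
    | succ m ih =>
      have h1 : n * (m + 1) = n * m + n := by ring
      calc |g (n * (m+1)) - (m+1 : ℕ) * g n|
          = |(g (n*m + n) - g (n*m) - g n) + (g (n*m) - m * g n)| := by
            rw [h1]; push_cast; ring_nf
        _ ≤ |g (n*m + n) - g (n*m) - g n| + |g (n*m) - m * g n| := abs_add_le _ _
        _ ≤ M + m * M := add_le_add (halmost _ _) ih
        _ = (m+1 : ℕ) * M := by push_cast; ring
  have hdiv : ∀ n m : ℕ, 1 ≤ n → 1 ≤ m → |g n / n - g m / m| ≤ M / n + M / m := by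
    intro n m hn hm
    have hn' : (0:ℝ) < n := by exact_mod_cast hn
    have hm' : (0:ℝ) < m := by exact_mod_cast hm
    have key : ∀ p q : ℕ, 1 ≤ p → 1 ≤ q → |g (p * q) / (p * q) - g p / p| ≤ M / p := by
      intro p q hp hq
      have hp' : (0:ℝ) < p := by exact_mod_cast hp
      have hq' : (0:ℝ) < q := by exact_mod_cast hq
      have h1 : g (p * q) / ((p:ℝ) * q) - g p / p = (g (p * q) - q * g p) / (p * q) := by
        field_simp
      rw [h1, abs_div, abs_of_pos (by positivity : (0:ℝ) < (p:ℝ)*q)]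
      rw [div_le_div_iff₀ (by positivity) hp']
      calc |g (p * q) - q * g p| * p ≤ (q * M) * p :=
            mul_le_mul_of_nonneg_right (hmul p q) hp'.le
        _ = M * ((p:ℝ) * q) := by ring
    have h1 := key n m hn hm
    have h2 := key m n hm hn
    have hcomm : g (n * m) / ((n:ℝ) * m) = g (m * n) / ((m:ℝ) * n) := by
      rw [mul_comm n m, mul_comm (n:ℝ) (m:ℝ)]
    calc |g n / n - g m / m|
        = |(g n / n - g (n*m) / ((n:ℝ)*m)) + (g (m*n) / ((m:ℝ)*n) - g m / m)| := by
          rw [hcomm]; ring_nf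
      _ ≤ |g n / n - g (n*m) / ((n:ℝ)*m)| + |g (m*n) / ((m:ℝ)*n) - g m / m| := abs_add_le _ _
      _ ≤ M / n + M / m := by
          rw [abs_sub_comm]
          exact add_le_add h1 h2
  -- for any rotation vector, dot w v is the limit of g(n i)/(n i)
  have hlim : ∀ w ∈ RotSet ⇑f, ∀ (n : ℕ → ℕ) (x : ℕ → V2), Tendsto n atTop atTop →
      Tendsto (fun i => ((n i : ℝ))⁻¹ • ((⇑f)^[n i] (x i) - x i)) atTop (𝓝 w) →
      Tendsto (fun i => g (n i) / (n i)) atTop (𝓝 (dot w v)) := by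
    intro w _ n x hn hx
    have h1 : Tendsto (fun i => dot (((n i : ℝ))⁻¹ • ((⇑f)^[n i] (x i) - x i)) v)
        atTop (𝓝 (dot w v)) := ((dot_cont v).tendsto w).comp hx
    have h2 : Tendsto (fun i =>
        dot (((n i : ℝ))⁻¹ • ((⇑f)^[n i] (x i) - x i)) v - g (n i) / (n i)) atTop (𝓝 0) := by
      apply squeeze_zero_norm' (a := fun i => M / (n i))
      · filter_upwards [hn.eventually_ge_atTop 1] with i hi
        have hni : (0:ℝ) < n i := by exact_mod_cast hi
        have hd : dot (((n i : ℝ))⁻¹ • ((⇑f)^[n i] (x i) - x i)) v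
            = (dot ((⇑f)^[n i] (x i) - x i) v) / (n i) := by
          simp [dot, smul_eq_mul]; ring
        rw [Real.norm_eq_abs, hd, div_sub_div_same, abs_div,
          abs_of_pos hni, div_le_div_iff₀ hni hni]
        have : dot ((⇑f)^[n i] (x i) - x i) v - g (n i)
            = dot (((⇑f)^[n i] (x i) - x i) - ((⇑f)^[n i] 0 - 0)) v := by
          simp only [hg, dot_sub]
        rw [this]
        exact mul_le_mul_of_nonneg_right (hdevN (n i) (x i) 0) hni.le
      · exact (tendsto_const_div_atTop_nhds_zero_nat M).comp hn
    have h3 := h1.sub h2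
    simpa using h3
  -- projection to v is constant on the rotation set
  have hconst : ∀ w ∈ RotSet ⇑f, ∀ w' ∈ RotSet ⇑f, dot w v = dot w' v := by
    intro w hw w' hw'
    obtain ⟨n, x, hn, hx⟩ := hw
    obtain ⟨m, y, hm, hy⟩ := hw'
    have h1 := hlim w ⟨n, x, hn, hx⟩ n x hn hx
    have h2 := hlim w' ⟨m, y, hm, hy⟩ m y hm hy
    have h3 : Tendsto (fun i => g (n i) / (n i) - g (m i) / (m i)) atTop
        (𝓝 (dot w v - dot w' v)) := h1.sub h2
    have h4 : Tendsto (fun i => g (n i) / (n i) - g (m i) / (m i)) atTop (𝓝 0) := by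
      apply squeeze_zero_norm' (a := fun i => M / (n i) + M / (m i))
      · filter_upwards [hn.eventually_ge_atTop 1, hm.eventually_ge_atTop 1] with i h1 h2
        rw [Real.norm_eq_abs]
        exact hdiv (n i) (m i) h1 h2
      · have := ((tendsto_const_div_atTop_nhds_zero_nat M).comp hn).add
          ((tendsto_const_div_atTop_nhds_zero_nat M).comp hm)
        simpa using this
    have := tendsto_nhds_unique h3 h4
    linarith
  obtain ⟨w₀, hw₀⟩ := rotset_nonempty ⇑f hf hlift
  -- facts about v
  have hvv : 0 < dot v v := by
    have h : v.1 ≠ 0 ∨ v.2 ≠ 0 := by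
      by_contra h
      push_neg at h
      exact hv (Prod.ext h.1 h.2)
    rcases h with h | h <;>
      · simp only [dot]
        nlinarith [mul_self_pos.mpr h, mul_self_nonneg v.1, mul_self_nonneg v.2]
  have hnrm : 0 < nrm v := Real.sqrt_pos.mpr hvv
  have hnrmsq : nrm v * nrm v = dot v v := Real.mul_self_sqrt hvv.le
  refine ⟨dot w₀ v / nrm v, ?_, ?_⟩
  · apply Set.eq_singleton_iff_nonempty_unique_mem.mpr
    refine ⟨⟨_, ⟨w₀, hw₀, rfl⟩⟩, ?_⟩
    rintro p ⟨w, hw, rfl⟩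
    show dot w v / nrm v = dot w₀ v / nrm v
    rw [hconst w hw w₀ hw₀]
  · rintro w hw
    refine ⟨dot w (perp v) / dot v v, ?_⟩
    have hdw : dot w₀ v = dot w v := hconst w₀ hw₀ w hw
    have hcoef : dot w₀ v / nrm v / nrm v = dot w v / dot v v := by
      rw [hdw, div_div, hnrmsq]
    rw [hcoef]
    have hD : dot v v ≠ 0 := hvv.ne'
    have hD' : v.1 * v.1 + v.2 * v.2 ≠ 0 := hD
    refine Prod.ext ?_ ?_ <;>
      · simp only [Prod.fst_add, Prod.snd_add, Prod.smul_fst, Prod.smul_snd,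
          smul_eq_mul, dot, perp]
        field_simp [hD']
        rw [eq_div_iff (show v.1 ^ 2 + v.2 ^ 2 ≠ 0 by intro h; apply hD'; nlinarith [sq_nonneg v.1, sq_nonneg v.2])]
        ring
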